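/- Let n ≥ 1 and let u, v : Fin (n+2) → ℝ be linearly independent. Then the 2-plane span{u,v} contains exactly one null direction — i.e. there exists a nonzero null vector w ∈ span{u,v}, and any two nonzero null vectors in span{u,v} are scalar multiples of each other — if and only if ⟨u,v⟩² = ⟨u,u⟩⟨v,v⟩ (equivalently, the bivector B = u∧v satisfies B·B = 0). -/

import Mathlib

open Finset

/-- The Minkowski signature factor: `ε 0 = 1`, `ε i = −1` for `i ≠ 0`. -/
noncomputable def eps {n : ℕ} (i : Fin (n + 2)) : ℝ := if i = 0 then 1 else -1

/-- The Minkowski bilinear form `⟨x,y⟩ = x 0 * y 0 − Σ_{a=1}^{n+1} x a * y a` on ℝ^{n+2}. -/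
noncomputable def mink {n : ℕ} (x y : Fin (n + 2) → ℝ) : ℝ :=
  ∑ i, eps i * x i * y i

lemma mink_expand {n : ℕ} (u v : Fin (n + 2) → ℝ) (a b : ℝ) :
    mink (a • u + b • v) (a • u + b • v)
      = a ^ 2 * mink u u + 2 * a * b * mink u v + b ^ 2 * mink v v := by
  simp only [mink, Pi.add_apply, Pi.smul_apply, smul_eq_mul, Finset.mul_sum,
    ← Finset.sum_add_distrib]
  exact Finset.sum_congr rfl fun i _ => by ring

lemma mink_self {n : ℕ} (x : Fin (n + 2) → ℝ) :
    mink x x = x 0 * x 0 - ∑ i : Fin (n + 1), x i.succ * x i.succ := by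
  rw [mink, Fin.sum_univ_succ]
  have h : ∀ i : Fin (n + 1), eps (Fin.succ i) * x i.succ * x i.succ
      = -(x i.succ * x i.succ) := by
    intro i; simp [eps, Fin.succ_ne_zero]
  rw [Finset.sum_congr rfl fun i _ => h i]
  simp [eps, sub_eq_add_neg]

lemma null_head {n : ℕ} (x : Fin (n + 2) → ℝ) (h0 : x 0 = 0) (hx : mink x x = 0) :
    x = 0 := by
  have h := mink_self x
  rw [hx, h0] at h
  have hsum : ∑ i : Fin (n + 1), x i.succ * x i.succ = 0 := by linarith
  have hz := (Finset.sum_eq_zero_iff_of_nonneg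
    (fun i _ => mul_self_nonneg (x i.succ))).mp hsum
  funext j
  refine Fin.cases ?_ ?_ j
  · exact h0
  · intro i
    exact mul_self_eq_zero.mp (hz i (Finset.mem_univ i))

lemma no_totally_null {n : ℕ} (u v : Fin (n + 2) → ℝ)
    (huv : LinearIndependent ℝ ![u, v])
    (hA : mink u u = 0) (hB : mink u v = 0) (hC : mink v v = 0) : False := by
  have hli : ∀ a b : ℝ, a • u + b • v = 0 → a = 0 ∧ b = 0 := fun a b h =>
    LinearIndependent.pair_iff.mp huv a b h
  set w : Fin (n + 2) → ℝ := v 0 • u + (-(u 0)) • v with hwdef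
  have hwnull : mink w w = 0 := by
    rw [hwdef, mink_expand, hA, hB, hC]; ring
  have hw0 : w 0 = 0 := by simp [hwdef]; ring
  have hw : w = 0 := null_head w hw0 hwnull
  obtain ⟨h1, h2⟩ := hli _ _ hw
  have hu0 : u 0 = 0 := by linarith [neg_eq_zero.mp h2]
  have hu : u = 0 := null_head u hu0 hA
  obtain ⟨h3, _⟩ := hli 1 0 (by simp [hu])
  exact one_ne_zero h3

/-- The 2-plane `span{u,v}` spanned by linearly independent `u, v` contains exactly one
null direction iff `⟨u,v⟩² = ⟨u,u⟩⟨v,v⟩` (i.e. the bivector `u∧v` is null). -/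
theorem null_plane_iff (n : ℕ) (hn : 1 ≤ n) (u v : Fin (n + 2) → ℝ)
    (huv : LinearIndependent ℝ ![u, v]) :
    ((∃ w ∈ Submodule.span ℝ {u, v}, w ≠ 0 ∧ mink w w = 0) ∧
      ∀ w₁ ∈ Submodule.span ℝ {u, v}, ∀ w₂ ∈ Submodule.span ℝ {u, v},
        w₁ ≠ 0 → w₂ ≠ 0 → mink w₁ w₁ = 0 → mink w₂ w₂ = 0 → ∃ c : ℝ, w₂ = c • w₁) ↔
    (mink u v) ^ 2 = mink u u * mink v v := by
  set A := mink u u with hAdef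
  set B := mink u v with hBdef
  set C := mink v v with hCdef
  have hli : ∀ a b : ℝ, a • u + b • v = 0 → a = 0 ∧ b = 0 := fun a b h =>
    LinearIndependent.pair_iff.mp huv a b h
  have hne : ∀ a b : ℝ, ¬(a = 0 ∧ b = 0) → a • u + b • v ≠ 0 := by
    intro a b hab h
    exact hab (hli a b h)
  have hmem : ∀ a b : ℝ, a • u + b • v ∈ Submodule.span ℝ {u, v} := by
    intro a b
    exact Submodule.mem_span_pair.mpr ⟨a, b, rfl⟩
  have huZ : u ≠ 0 := by
    intro h
    exact one_ne_zero (hli 1 0 (by simp [h])).1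
  constructor
  · rintro ⟨⟨w, hw, hwne, hwnull⟩, huniq⟩
    by_contra hneq
    rcases lt_or_gt_of_ne hneq with hlt | hgt
    · -- B^2 < A*C : no null vector at all, contradicting existence
      have hA : A ≠ 0 := by
        intro h
        rw [h] at hlt
        nlinarith [sq_nonneg B]
      obtain ⟨a, b, hab⟩ := Submodule.mem_span_pair.mp hw
      rw [← hab] at hwnull
      rw [mink_expand] at hwnull
      have key : (A * a + B * b) ^ 2 + (A * C - B ^ 2) * b ^ 2 = 0 := by
        linear_combination A * hwnull
      have hb : b = 0 := by
        by_contra hb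
        have h2 : 0 < b ^ 2 := by positivity
        nlinarith [sq_nonneg (A * a + B * b)]
      have ha : a = 0 := by
        rw [hb] at key
        have : A * a = 0 := by nlinarith [sq_nonneg (A * a)]
        exact (mul_eq_zero.mp this).resolve_left hA
      rw [ha, hb] at hab
      simp at hab
      exact hwne hab.symm
    · -- B^2 > A*C : two independent null directions, contradicting uniqueness
      by_cases hA : A = 0
      · have hB : B ≠ 0 := by
          intro h
          rw [hA, h] at hgt
          nlinarith
        have hw2null : mink ((-C) • u + (2 * B) • v) ((-C) • u + (2 * B) • v) = 0 := by
          rw [mink_expand, ← hAdef, ← hBdef, ← hCdef, hA]; ring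
        have hunull : mink ((1:ℝ) • u + (0:ℝ) • v) ((1:ℝ) • u + (0:ℝ) • v) = 0 := by
          rw [mink_expand, ← hAdef, ← hBdef, ← hCdef, hA]; ring
        obtain ⟨c, hc⟩ := huniq _ (hmem (1:ℝ) (0:ℝ)) _ (hmem (-C) (2 * B))
          (hne (1:ℝ) (0:ℝ) (by simp)) (hne (-C) (2 * B) (by simp [hB])) hunull hw2null
        have h0 : (-C - c * 1) • u + (2 * B - c * 0) • v = 0 := by
          calc (-C - c * 1) • u + (2 * B - c * 0) • v
              = ((-C) • u + (2 * B) • v) - c • ((1 : ℝ) • u + (0 : ℝ) • v) := by module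
            _ = 0 := by rw [← hc]; simp
        have := (hli _ _ h0).2
        simp at this
        exact hB this
      · set s := Real.sqrt (B ^ 2 - A * C) with hsdef
        have hs : s ^ 2 = B ^ 2 - A * C := Real.sq_sqrt (by linarith)
        have hspos : 0 < s := Real.sqrt_pos.mpr (by linarith)
        have key : ∀ t : ℝ, t ^ 2 = B ^ 2 - A * C →
            mink (((-B + t) / A) • u + (1:ℝ) • v) (((-B + t) / A) • u + (1:ℝ) • v) = 0 := by
          intro t ht
          rw [mink_expand, ← hAdef, ← hBdef, ← hCdef]
          field_simp
          linear_combination ht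
        obtain ⟨c, hc⟩ := huniq _ (hmem ((-B + s) / A) (1:ℝ)) _ (hmem ((-B + -s) / A) (1:ℝ))
          (hne _ (1:ℝ) (by simp)) (hne _ (1:ℝ) (by simp)) (key s hs) (key (-s) (by rw [← hs]; ring))
        have h0 : ((-B + -s) / A - c * ((-B + s) / A)) • u + (1 - c * 1) • v = 0 := by
          calc ((-B + -s) / A - c * ((-B + s) / A)) • u + (1 - c * 1) • v
              = (((-B + -s) / A) • u + (1 : ℝ) • v)
                - c • (((-B + s) / A) • u + (1 : ℝ) • v) := by module
            _ = 0 := by rw [← hc]; simp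
        obtain ⟨e1, e2⟩ := hli _ _ h0
        have hc1 : c = 1 := by linarith
        rw [hc1] at e1
        have hd : ((-B + -s) - (-B + s)) / A = 0 := by
          rw [← div_sub_div_same]
          linarith
        have hnum := (div_eq_zero_iff.mp hd).resolve_right hA
        linarith
  · intro heq
    by_cases hA : A = 0
    · have hB : B = 0 := by
        have : B ^ 2 = 0 := by rw [heq, hA]; ring
        exact pow_eq_zero_iff (by norm_num) |>.mp this
      by_cases hC : C = 0
      · exact (no_totally_null u v huv hA hB hC).elim
      · constructor
        · refine ⟨u, ?_, huZ, hA⟩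
          exact Submodule.subset_span (by simp)
        · intro w₁ hw₁ w₂ hw₂ h1ne h2ne h1null h2null
          obtain ⟨a₁, b₁, hab₁⟩ := Submodule.mem_span_pair.mp hw₁
          obtain ⟨a₂, b₂, hab₂⟩ := Submodule.mem_span_pair.mp hw₂
          rw [← hab₁] at h1null
          rw [← hab₂] at h2null
          rw [mink_expand, ← hAdef, ← hBdef, ← hCdef, hA, hB] at h1null h2null
          have hb₁ : b₁ = 0 := by
            have h : b₁ ^ 2 * C = 0 := by linear_combination h1null
            have : b₁ ^ 2 = 0 := (mul_eq_zero.mp h).resolve_right hC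
            exact pow_eq_zero_iff (by norm_num) |>.mp this
          have hb₂ : b₂ = 0 := by
            have h : b₂ ^ 2 * C = 0 := by linear_combination h2null
            have : b₂ ^ 2 = 0 := (mul_eq_zero.mp h).resolve_right hC
            exact pow_eq_zero_iff (by norm_num) |>.mp this
          have ha₁ : a₁ ≠ 0 := by
            intro h
            rw [← hab₁, h, hb₁] at h1ne
            simp at h1ne
          refine ⟨a₂ / a₁, ?_⟩
          rw [← hab₁, ← hab₂, hb₁, hb₂]
          simp [smul_smul, div_mul_cancel₀ _ ha₁]
    · constructor
      · refine ⟨B • u + (-A) • v, hmem B (-A), hne B (-A) (by simp [hA]), ?_⟩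
        rw [mink_expand, ← hAdef, ← hBdef, ← hCdef]
        linear_combination (-A) * heq
      · intro w₁ hw₁ w₂ hw₂ h1ne h2ne h1null h2null
        obtain ⟨a₁, b₁, hab₁⟩ := Submodule.mem_span_pair.mp hw₁
        obtain ⟨a₂, b₂, hab₂⟩ := Submodule.mem_span_pair.mp hw₂
        rw [← hab₁] at h1null
        rw [← hab₂] at h2null
        rw [mink_expand, ← hAdef, ← hBdef, ← hCdef] at h1null h2null
        have k₁ : A * a₁ + B * b₁ = 0 := by
          have : (A * a₁ + B * b₁) ^ 2 = 0 := by
            linear_combination A * h1null + b₁ ^ 2 * heq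
          exact pow_eq_zero_iff (by norm_num) |>.mp this
        have k₂ : A * a₂ + B * b₂ = 0 := by
          have : (A * a₂ + B * b₂) ^ 2 = 0 := by
            linear_combination A * h2null + b₂ ^ 2 * heq
          exact pow_eq_zero_iff (by norm_num) |>.mp this
        have hb₁ : b₁ ≠ 0 := by
          intro h
          rw [h] at k₁
          have ha : a₁ = 0 := by
            have : A * a₁ = 0 := by linarith
            exact (mul_eq_zero.mp this).resolve_left hA
          rw [← hab₁, ha, h] at h1ne
          simp at h1ne
        refine ⟨b₂ / b₁, ?_⟩
        rw [← hab₁, ← hab₂]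
        have hcross : a₂ * b₁ = a₁ * b₂ := by
          have : A * (a₂ * b₁) = A * (a₁ * b₂) := by
            linear_combination b₁ * k₂ - b₂ * k₁
          exact mul_left_cancel₀ hA this
        have e1 : b₂ / b₁ * a₁ = a₂ := by
          field_simp
          linear_combination -hcross
        have e2 : b₂ / b₁ * b₁ = b₂ := div_mul_cancel₀ _ hb₁
        rw [smul_add, smul_smul, smul_smul, e1, e2]
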